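/- Let n ≥ 1, m ≥ 2, and work in the finite group ZMod n. Let (R_{ij})_{i≠j, i,j∈{1,…,m}} be independent random variables each uniformly distributed on ZMod n, and for inputs x = (x_1,…,x_m) ∈ (ZMod n)^m define S_i = x_i + Σ_{j≠i} R_{ji} − Σ_{j≠i} R_{ij}. Then the random vector (S_1,…,S_m) is uniformly distributed on the finite set { s ∈ (ZMod n)^m : s_1 + ⋯ + s_m = x_1 + ⋯ + x_m }. -/

import Mathlib

open MeasureTheory ProbabilityTheory

namespace SecureSumAux

variable {n m : ℕ}

/-- The deterministic post-processing map: from the raw shares to the revealed vector. -/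
def f (x : Fin m → ZMod n) (r : {p : Fin m × Fin m // p.1 ≠ p.2} → ZMod n) :
    Fin m → ZMod n := fun i =>
  x i + (∑ j ∈ Finset.univ.erase i, (if h : j ≠ i then r ⟨(j, i), h⟩ else 0)) -
    ∑ j ∈ Finset.univ.erase i, (if h : i ≠ j then r ⟨(i, j), h⟩ else 0)

/-- auxiliary totalizer -/
def G (r : {p : Fin m × Fin m // p.1 ≠ p.2} → ZMod n) (q : Fin m × Fin m) : ZMod n :=
  if h : q.1 ≠ q.2 then r ⟨q, h⟩ else 0

lemma inflow_eq (r : {p : Fin m × Fin m // p.1 ≠ p.2} → ZMod n) (i : Fin m) :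
    (∑ j ∈ Finset.univ.erase i, (if h : j ≠ i then r ⟨(j, i), h⟩ else 0)) =
      ∑ j, G r (j, i) := by
  rw [Finset.sum_erase]
  · exact Finset.sum_congr rfl fun j _ => rfl
  · simp [G]

lemma outflow_eq (r : {p : Fin m × Fin m // p.1 ≠ p.2} → ZMod n) (i : Fin m) :
    (∑ j ∈ Finset.univ.erase i, (if h : i ≠ j then r ⟨(i, j), h⟩ else 0)) =
      ∑ j, G r (i, j) := by
  rw [Finset.sum_erase]
  · exact Finset.sum_congr rfl fun j _ => rfl
  · simp [G]

/-- The total of the revealed vector is always the total of the inputs. -/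
lemma sum_f (x : Fin m → ZMod n) (r : {p : Fin m × Fin m // p.1 ≠ p.2} → ZMod n) :
    ∑ i, f x r i = ∑ i, x i := by
  unfold f
  simp only [inflow_eq, outflow_eq]
  rw [Finset.sum_sub_distrib, Finset.sum_add_distrib]
  rw [Finset.sum_comm (f := fun i j => G r (j, i))]
  abel

/-- `f` is affine: shifting the shares shifts the output by the linear part. -/
lemma f_add (x : Fin m → ZMod n) (r a : {p : Fin m × Fin m // p.1 ≠ p.2} → ZMod n)
    (i : Fin m) : f x (r + a) i = f x r i + f 0 a i := by
  unfold f
  have h1 : ∀ (i j : Fin m),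
      (if h : j ≠ i then (r + a) ⟨(j, i), h⟩ else 0) =
        (if h : j ≠ i then r ⟨(j, i), h⟩ else 0) + (if h : j ≠ i then a ⟨(j, i), h⟩ else 0) := by
    intro i j; by_cases h : j ≠ i <;> simp [h]
  have h2 : ∀ (i j : Fin m),
      (if h : i ≠ j then (r + a) ⟨(i, j), h⟩ else 0) =
        (if h : i ≠ j then r ⟨(i, j), h⟩ else 0) + (if h : i ≠ j then a ⟨(i, j), h⟩ else 0) := by
    intro i j; by_cases h : i ≠ j <;> simp [h]
  simp only [h1, h2, Finset.sum_add_distrib, Pi.zero_apply]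
  ring

/-- The explicit shares realizing a given zero-sum shift `t`. -/
def aof (i0 : Fin m) (t : Fin m → ZMod n) :
    {p : Fin m × Fin m // p.1 ≠ p.2} → ZMod n :=
  fun p => if p.1.1 = i0 then t p.1.2 else 0

lemma f_aof (i0 : Fin m) (t : Fin m → ZMod n) (ht : ∑ i, t i = 0) (i : Fin m) :
    f 0 (aof i0 t) i = t i := by
  have hin : (∑ j ∈ Finset.univ.erase i, (if h : j ≠ i then aof i0 t ⟨(j, i), h⟩ else 0)) =
      if i = i0 then 0 else t i := by
    by_cases hi : i = i0
    · rw [if_pos hi]; subst hi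
      apply Finset.sum_eq_zero
      intro j hj
      have hji : j ≠ i := (Finset.mem_erase.mp hj).1
      simp [aof, hji]
    · rw [if_neg hi]
      have hterm : ∀ j ∈ Finset.univ.erase i,
          (if h : j ≠ i then aof i0 t ⟨(j, i), h⟩ else 0) = if j = i0 then t i else 0 := by
        intro j hj
        have hji : j ≠ i := (Finset.mem_erase.mp hj).1
        simp [aof, hji]
      rw [Finset.sum_congr rfl hterm, Finset.sum_ite_eq' (Finset.univ.erase i) i0]
      simp [Ne.symm hi]
  have hout : (∑ j ∈ Finset.univ.erase i, (if h : i ≠ j then aof i0 t ⟨(i, j), h⟩ else 0)) =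
      if i = i0 then -t i else 0 := by
    by_cases hi : i = i0
    · rw [if_pos hi]; subst hi
      have hterm : ∀ j ∈ Finset.univ.erase i,
          (if h : i ≠ j then aof i t ⟨(i, j), h⟩ else 0) = t j := by
        intro j hj
        have hji : j ≠ i := (Finset.mem_erase.mp hj).1
        simp [aof, Ne.symm hji]
      rw [Finset.sum_congr rfl hterm, Finset.sum_erase_eq_sub (Finset.mem_univ i), ht]
      ring
    · rw [if_neg hi]
      apply Finset.sum_eq_zero
      intro j hj
      have hji : j ≠ i := (Finset.mem_erase.mp hj).1
      simp [aof, Ne.symm hji, hi]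
  unfold f
  rw [hin, hout]
  by_cases hi : i = i0 <;> simp [hi]

end SecureSumAux

open SecureSumAux in
/-- **Finite-field Secure-Sum: the revealed vector is uniform on the correct-sum set.**
Let `n ≥ 1`, `m ≥ 2`, and let `(R i j)` (for ordered pairs `i ≠ j` in `{1, …, m}`) be
independent random variables, each uniform on `ZMod n`.  Party `i` reveals
`S i = x i + ∑_{j≠i} R j i - ∑_{j≠i} R i j`.  Then `(S 1, …, S m)` is uniformly distributed
on the finite set of tuples `s` with `s 1 + ⋯ + s m = x 1 + ⋯ + x m`. -/
theorem secure_sum_zmod_uniform (n m : ℕ) (hn : 1 ≤ n) (hm : 2 ≤ m)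
    {Ω : Type*} [MeasurableSpace Ω] (μ : Measure Ω) [IsProbabilityMeasure μ]
    (R : {p : Fin m × Fin m // p.1 ≠ p.2} → Ω → ZMod n)
    (hmeas : ∀ p, Measurable (R p))
    (hindep : iIndepFun R μ)
    (hunif : ∀ p, Measure.map (R p) μ = uniformOn (Set.univ : Set (ZMod n)))
    (x : Fin m → ZMod n)
    (S : Ω → Fin m → ZMod n)
    (hS : ∀ ω i, S ω i = x i +
      (∑ j ∈ Finset.univ.erase i, (if h : j ≠ i then R ⟨(j, i), h⟩ ω else 0)) -
      ∑ j ∈ Finset.univ.erase i, (if h : i ≠ j then R ⟨(i, j), h⟩ ω else 0)) :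
    Measure.map S μ = uniformOn {s : Fin m → ZMod n | ∑ i, s i = ∑ i, x i} := by
  classical
  haveI : NeZero n := ⟨Nat.one_le_iff_ne_zero.mp hn⟩
  set C : Set (Fin m → ZMod n) := {s : Fin m → ZMod n | ∑ i, s i = ∑ i, x i} with hCdef
  -- the raw-shares vector
  set T : Ω → {p : Fin m × Fin m // p.1 ≠ p.2} → ZMod n := fun ω p => R p ω with hT
  have hST : ∀ ω, S ω = f x (T ω) := by
    intro ω; funext i; rw [hS ω i]; rfl
  -- measurability
  have hmeasT : Measurable T := measurable_pi_iff.mpr fun p => hmeas p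
  have hmeasS : Measurable S := by
    have : S = (f x) ∘ T := funext hST
    rw [this]
    exact (measurable_of_countable _).comp hmeasT
  -- each atom of the raw-shares vector has the same probability
  set c : ENNReal := (n : ENNReal)⁻¹ ^ (Fintype.card {p : Fin m × Fin m // p.1 ≠ p.2}) with hc
  have hsingle : ∀ (p : {p : Fin m × Fin m // p.1 ≠ p.2}) (a : ZMod n),
      μ (R p ⁻¹' {a}) = (n : ENNReal)⁻¹ := by
    intro p a
    have h1 : Measure.map (R p) μ {a} = μ (R p ⁻¹' {a}) :=
      Measure.map_apply (hmeas p) (measurableSet_singleton a)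
    rw [← h1, hunif p, uniformOn, cond_apply MeasurableSet.univ, Set.univ_inter,
      Measure.count_singleton, mul_one, Measure.count_apply_finite _ Set.finite_univ]
    simp [ZMod.card]
  have keyT : ∀ g : {p : Fin m × Fin m // p.1 ≠ p.2} → ZMod n, μ (T ⁻¹' {g}) = c := by
    intro g
    have h1 : T ⁻¹' {g} = ⋂ p ∈ (Finset.univ : Finset {p : Fin m × Fin m // p.1 ≠ p.2}),
        R p ⁻¹' {g p} := by
      ext ω
      simp [hT, funext_iff]
    rw [h1, hindep.measure_inter_preimage_eq_mul Finset.univ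
      (sets := fun p => {g p}) (fun i _ => measurableSet_singleton _)]
    simp only [hsingle]
    rw [Finset.prod_const, Finset.card_univ, hc]
  -- fibers of the deterministic map
  set F : (Fin m → ZMod n) → Finset ({p : Fin m × Fin m // p.1 ≠ p.2} → ZMod n) :=
    fun s => Finset.univ.filter (fun g => f x g = s) with hF
  have hpre : ∀ s, S ⁻¹' {s} = ⋃ g ∈ F s, T ⁻¹' {g} := by
    intro s
    ext ω
    simp only [Set.mem_preimage, Set.mem_singleton_iff, Set.mem_iUnion, hF,
      Finset.mem_filter, Finset.mem_univ, true_and, hST ω]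
    constructor
    · intro h; exact ⟨T ω, h, rfl⟩
    · rintro ⟨g, hg, rfl⟩; exact hg
  have hmapS : ∀ s, Measure.map S μ {s} = (F s).card * c := by
    intro s
    have hd : (↑(F s) : Set _).PairwiseDisjoint (fun g => T ⁻¹' {g}) := by
      intro g₁ _ g₂ _ hne
      exact Set.disjoint_left.mpr fun ω h1 h2 => hne (h1.symm.trans h2)
    have hmeasb : ∀ g ∈ F s, MeasurableSet (T ⁻¹' {g}) :=
      fun g _ => hmeasT (measurableSet_singleton g)
    rw [Measure.map_apply hmeasS (measurableSet_singleton s), hpre s,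
      measure_biUnion_finset hd hmeasb,
      Finset.sum_congr rfl (fun g _ => keyT g), Finset.sum_const, nsmul_eq_mul]
  -- fibers over points with the wrong sum are empty
  have hFempty : ∀ s, s ∉ C → F s = ∅ := by
    intro s hs
    rw [Finset.eq_empty_iff_forall_notMem]
    intro g hg
    rw [hF] at hg
    simp only [Finset.mem_filter, Finset.mem_univ, true_and] at hg
    exact hs (by rw [hCdef, Set.mem_setOf_eq, ← hg, sum_f])
  -- fibers over points with the correct sum all have the same size
  have hFcard : ∀ s ∈ C, ∀ s' ∈ C, (F s).card = (F s').card := by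
    intro s hs s' hs'
    have i0 : Fin m := ⟨0, by omega⟩
    set t : Fin m → ZMod n := s' - s with htdef
    have ht : ∑ i, t i = 0 := by
      rw [htdef]
      simp only [Pi.sub_apply, Finset.sum_sub_distrib]
      rw [hCdef] at hs hs'
      rw [hs, hs']; ring
    set a := aof i0 t with ha
    have hshift : ∀ g : {p : Fin m × Fin m // p.1 ≠ p.2} → ZMod n,
        f x (g + a) = f x g + t := by
      intro g; funext i
      rw [Pi.add_apply, f_add, f_aof i0 t ht]
    apply Finset.card_bij' (fun g _ => g + a) (fun g _ => g - a)
    · intro g hg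
      rw [hF] at hg ⊢
      simp only [Finset.mem_filter, Finset.mem_univ, true_and] at hg ⊢
      rw [hshift, hg, htdef]; funext i; simp
    · intro g hg
      rw [hF] at hg ⊢
      simp only [Finset.mem_filter, Finset.mem_univ, true_and] at hg ⊢
      have h3 : f x ((g - a) + a) = f x (g - a) + t := hshift (g - a)
      rw [sub_add_cancel, hg] at h3
      have h2 : f x (g - a) = s' - t := by
        rw [eq_sub_iff_add_eq, ← h3]
      rw [h2, htdef]; funext i; simp
    · intro g _; simp
    · intro g _; simp
  -- the cardinality of the correct-sum set
  set Cfin : Finset (Fin m → ZMod n) :=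
    Finset.univ.filter (fun s => ∑ i, s i = ∑ i, x i) with hCfin
  have hxC : x ∈ C := by rw [hCdef]; exact rfl
  have hxCfin : x ∈ Cfin := by rw [hCfin]; simp
  -- decomposition of total mass into singletons
  have hsum_univ : ∀ (ν : Measure (Fin m → ZMod n)),
      ν Set.univ = ∑ s : Fin m → ZMod n, ν {s} := by
    intro ν
    have hu : (Set.univ : Set (Fin m → ZMod n)) =
        ⋃ s ∈ (Finset.univ : Finset (Fin m → ZMod n)), {s} := by
      simpa using (Set.iUnion_of_singleton (Fin m → ZMod n)).symm
    have hd : (↑(Finset.univ : Finset (Fin m → ZMod n)) : Set _).PairwiseDisjoint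
        (fun s => ({s} : Set (Fin m → ZMod n))) := by
      intro s₁ _ s₂ _ hne
      exact Set.disjoint_singleton.mpr hne
    have hmeasb : ∀ s ∈ (Finset.univ : Finset (Fin m → ZMod n)),
        MeasurableSet ({s} : Set (Fin m → ZMod n)) := fun s _ => measurableSet_singleton s
    rw [hu, measure_biUnion_finset hd hmeasb]
  -- total mass identity
  have htotal : (Cfin.card : ENNReal) * ((F x).card * c) = 1 := by
    have h1 : Measure.map S μ Set.univ = 1 := by
      rw [Measure.map_apply hmeasS MeasurableSet.univ, Set.preimage_univ, measure_univ]
    rw [hsum_univ] at h1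
    have h2 : ∀ s ∈ (Finset.univ : Finset (Fin m → ZMod n)),
        Measure.map S μ {s} = if s ∈ Cfin then ((F x).card : ENNReal) * c else 0 := by
      intro s _
      by_cases hsC : s ∈ C
      · have hmem : s ∈ Cfin := by
          rw [hCfin]; simp only [Finset.mem_filter, Finset.mem_univ, true_and]; exact hsC
        rw [if_pos hmem, hmapS, hFcard s hsC x hxC]
      · have hmem : s ∉ Cfin := by
          rw [hCfin]; simp only [Finset.mem_filter, Finset.mem_univ, true_and]; exact hsC
        rw [if_neg hmem, hmapS, hFempty s hsC]
        simp
    rw [Finset.sum_congr rfl h2, Finset.sum_ite_mem, Finset.univ_inter,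
      Finset.sum_const, nsmul_eq_mul] at h1
    exact h1
  have hCcard_ne : (Cfin.card : ENNReal) ≠ 0 := by
    simp only [ne_eq, Nat.cast_eq_zero, Finset.card_eq_zero]
    intro h
    rw [h] at hxCfin
    exact absurd hxCfin (Finset.notMem_empty x)
  have hval : ((F x).card : ENNReal) * c = (Cfin.card : ENNReal)⁻¹ := by
    calc ((F x).card : ENNReal) * c
        = (Cfin.card : ENNReal)⁻¹ * ((Cfin.card : ENNReal) * (((F x).card : ENNReal) * c)) := by
          rw [← mul_assoc, ENNReal.inv_mul_cancel hCcard_ne (by simp), one_mul]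
      _ = (Cfin.card : ENNReal)⁻¹ := by rw [htotal, mul_one]
  -- now compare both measures on singletons
  apply MeasureTheory.Measure.ext_of_singleton
  intro s
  have hCmeas : MeasurableSet C := .of_discrete
  have hcount : Measure.count C = (Cfin.card : ENNReal) := by
    rw [Measure.count_apply_finite _ (Set.toFinite C)]
    congr 1
    have hfs : (Set.toFinite C).toFinset = Cfin := by
      ext a
      simp [Set.Finite.mem_toFinset, hCfin, hCdef, Set.mem_setOf_eq]
    rw [hfs]
  rw [uniformOn, cond_apply hCmeas, hcount]
  by_cases hsC : s ∈ C
  · have hint : C ∩ {s} = {s} := by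
      rw [Set.inter_eq_right.mpr]
      simpa using hsC
    rw [hint, Measure.count_singleton, mul_one, hmapS, hFcard s hsC x hxC, hval]
  · have hint : C ∩ {s} = ∅ := Set.inter_singleton_eq_empty.mpr hsC
    rw [hint, measure_empty, mul_zero, hmapS, hFempty s hsC]
    simp
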